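/- For two probability measures p₀ and p₁ on the real line with cumulative distribution functions F₀ and F₁, the k-Wasserstein distance satisfies W_k(p₀,p₁)^k = ∫₀¹ |F₀⁻¹(u) − F₁⁻¹(u)|^k du, where F⁻¹ denotes the generalized inverse (quantile function). -/

import Mathlib

open MeasureTheory Set

/-- Cumulative distribution function of a measure on `ℝ`. -/
noncomputable def cdf' (p : Measure ℝ) (x : ℝ) : ℝ := (p (Iic x)).toReal

/-- Generalized inverse (quantile function) of a cdf. -/
noncomputable def quantile' (p : Measure ℝ) (u : ℝ) : ℝ := sInf {x : ℝ | u ≤ cdf' p x}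

section Aux

open ProbabilityTheory Filter Topology intervalIntegral
open scoped ENNReal

/-! ### Quantile function basics -/

variable {p : Measure ℝ} [IsProbabilityMeasure p]

lemma cdf'_eq : cdf' p = cdf p := by
  funext x; rw [cdf', cdf_eq_real, measureReal_def]

lemma bddBelow_cdfSet {u : ℝ} (hu0 : 0 < u) : BddBelow {x : ℝ | u ≤ cdf' p x} := by
  rw [cdf'_eq]
  obtain ⟨x₀, hx₀⟩ : ∃ x₀, cdf p x₀ < u := ((tendsto_cdf_atBot p).eventually_lt_const hu0).exists
  exact ⟨x₀, fun y hy => by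
    by_contra h
    push_neg at h
    exact absurd (le_trans hy (monotone_cdf p h.le)) (not_le.2 hx₀)⟩

lemma nonempty_cdfSet {u : ℝ} (hu1 : u < 1) : {x : ℝ | u ≤ cdf' p x}.Nonempty := by
  rw [cdf'_eq]
  exact ((tendsto_cdf_atTop p).eventually_const_lt hu1).exists.imp fun x hx => hx.le

lemma monotoneOn_quantile' : MonotoneOn (quantile' p) (Ioo (0:ℝ) 1) := by
  intro u hu v hv huv
  exact csInf_le_csInf (bddBelow_cdfSet hu.1) (nonempty_cdfSet hv.2)
    (fun x hx => le_trans huv hx)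

lemma aemeasurable_quantile' : AEMeasurable (quantile' p) (volume.restrict (Ioo (0:ℝ) 1)) :=
  aemeasurable_restrict_of_monotoneOn measurableSet_Ioo monotoneOn_quantile'

lemma quantile'_le_iff {u x : ℝ} (hu0 : 0 < u) (hu1 : u < 1) :
    quantile' p u ≤ x ↔ u ≤ cdf' p x := by
  rw [cdf'_eq]
  have hS : {x : ℝ | u ≤ cdf' p x} = {x : ℝ | u ≤ cdf p x} := by rw [cdf'_eq]
  have hbdd : BddBelow {x : ℝ | u ≤ cdf p x} := hS ▸ bddBelow_cdfSet hu0
  have hne : {x : ℝ | u ≤ cdf p x}.Nonempty := hS ▸ nonempty_cdfSet hu1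
  constructor
  · intro h
    have hmem : u ≤ cdf p (sInf {x : ℝ | u ≤ cdf p x}) := by
      by_contra hlt
      push_neg at hlt
      have hrc := (cdf p).right_continuous (sInf {x : ℝ | u ≤ cdf p x})
      have : ∀ᶠ y in 𝓝[≥] (sInf {x : ℝ | u ≤ cdf p x}), cdf p y < u :=
        hrc.eventually_lt_const hlt
      obtain ⟨b, hb, hball⟩ := mem_nhdsGE_iff_exists_Ico_subset.mp this
      have hlb : b ∈ lowerBounds {x : ℝ | u ≤ cdf p x} := by
        intro y hy
        by_contra hys
        push_neg at hys
        have h1 : sInf {x : ℝ | u ≤ cdf p x} ≤ y := csInf_le hbdd hy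
        have : cdf p y < u := hball ⟨h1, hys⟩
        simp only [mem_setOf_eq] at hy
        linarith
      have h3 := le_csInf hne hlb
      exact absurd hb (not_lt.2 h3)
    rw [quantile', hS] at h
    exact hmem.trans (monotone_cdf p h)
  · intro h
    rw [quantile', hS]
    exact csInf_le hbdd h

lemma volume_Ioo_inter_Iic {c : ℝ} (hc1 : c ≤ 1) :
    volume (Ioo (0:ℝ) 1 ∩ Iic c) = ENNReal.ofReal c := by
  rcases lt_or_ge c 1 with h | h
  · have : Ioo (0:ℝ) 1 ∩ Iic c = Ioc 0 c := by
      ext x; simp only [mem_inter_iff, mem_Ioo, mem_Iic, mem_Ioc]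
      constructor
      · rintro ⟨⟨h1, _⟩, h3⟩; exact ⟨h1, h3⟩
      · rintro ⟨h1, h2⟩; exact ⟨⟨h1, lt_of_le_of_lt h2 h⟩, h2⟩
    rw [this, Real.volume_Ioc, sub_zero]
  · have hc : c = 1 := le_antisymm hc1 h
    subst hc
    have : Ioo (0:ℝ) 1 ∩ Iic 1 = Ioo 0 1 := by
      ext x; simp only [mem_inter_iff, mem_Ioo, mem_Iic]
      exact ⟨fun h => h.1, fun h => ⟨h, h.2.le⟩⟩
    rw [this, Real.volume_Ioo, sub_zero, ENNReal.ofReal_one]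

lemma cdf'_le_one (x : ℝ) : cdf' p x ≤ 1 := by rw [cdf'_eq]; exact cdf_le_one p x

instance : IsProbabilityMeasure (volume.restrict (Ioo (0:ℝ) 1)) := by
  constructor
  rw [Measure.restrict_apply_univ, Real.volume_Ioo]
  norm_num

lemma map_quantile' : (volume.restrict (Ioo (0:ℝ) 1)).map (quantile' p) = p := by
  have : IsProbabilityMeasure ((volume.restrict (Ioo (0:ℝ) 1)).map (quantile' p)) :=
    Measure.isProbabilityMeasure_map aemeasurable_quantile'
  refine Measure.ext_of_Iic _ _ (fun x => ?_)
  rw [Measure.map_apply_of_aemeasurable aemeasurable_quantile' measurableSet_Iic,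
    Measure.restrict_apply' measurableSet_Ioo]
  have hset : quantile' p ⁻¹' Iic x ∩ Ioo 0 1 = Ioo (0:ℝ) 1 ∩ Iic (cdf' p x) := by
    ext u
    simp only [mem_inter_iff, mem_preimage, mem_Iic, mem_Ioo]
    constructor
    · rintro ⟨h1, h2⟩
      exact ⟨h2, (quantile'_le_iff h2.1 h2.2).mp h1⟩
    · rintro ⟨h1, h2⟩
      exact ⟨(quantile'_le_iff h1.1 h1.2).mpr h2, h1⟩
  rw [hset, volume_Ioo_inter_Iic (cdf'_le_one x), cdf', ENNReal.ofReal_toReal (measure_ne_top p _)]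

/-! ### Layer-cake identity for positive parts over couplings -/

lemma measurable_slab (t : ℝ) : MeasurableSet {q : (ℝ × ℝ) × ℝ | q.1.2 + t ≤ q.2 ∧ q.2 < q.1.1} := by
  apply MeasurableSet.inter
  · exact measurableSet_le (f := fun q : (ℝ × ℝ) × ℝ => q.1.2 + t) (g := fun q => q.2)
      (by fun_prop) (by fun_prop)
  · exact measurableSet_lt (f := fun q : (ℝ × ℝ) × ℝ => q.2) (g := fun q => q.1.1)
      (by fun_prop) (by fun_prop)

lemma measurable_slab2 (t s : ℝ) : MeasurableSet {xy : ℝ × ℝ | xy.2 + t ≤ s ∧ s < xy.1} := by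
  apply MeasurableSet.inter
  · exact measurableSet_le (f := fun xy : ℝ × ℝ => xy.2 + t) (g := fun _ => s)
      (by fun_prop) (by fun_prop)
  · exact measurableSet_lt (f := fun _ : ℝ × ℝ => s) (g := fun xy => xy.1)
      (by fun_prop) (by fun_prop)

lemma lintegral_posPart_eq (π : Measure (ℝ × ℝ)) [SFinite π] (t : ℝ) :
    ∫⁻ xy, ENNReal.ofReal (xy.1 - xy.2 - t) ∂π
      = ∫⁻ s, π {xy : ℝ × ℝ | xy.2 + t ≤ s ∧ s < xy.1} ∂volume := by
  set S : Set ((ℝ × ℝ) × ℝ) := {q | q.1.2 + t ≤ q.2 ∧ q.2 < q.1.1} with hS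
  have key : ∀ xy : ℝ × ℝ, ENNReal.ofReal (xy.1 - xy.2 - t)
      = ∫⁻ s, S.indicator (1 : (ℝ × ℝ) × ℝ → ℝ≥0∞) (xy, s) ∂volume := by
    intro xy
    have h : ∀ s : ℝ, S.indicator (1 : (ℝ × ℝ) × ℝ → ℝ≥0∞) (xy, s)
        = (Ico (xy.2 + t) xy.1).indicator (1 : ℝ → ℝ≥0∞) s := by
      intro s; by_cases h : xy.2 + t ≤ s ∧ s < xy.1 <;>
        simp [Set.indicator, hS, mem_Ico, h]
    simp_rw [h]
    rw [lintegral_indicator_one measurableSet_Ico, Real.volume_Ico]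
    congr 1; ring
  simp_rw [key]
  have hmeas : AEMeasurable (Function.uncurry fun (xy : ℝ × ℝ) (s : ℝ) =>
      S.indicator (1 : (ℝ × ℝ) × ℝ → ℝ≥0∞) (xy, s)) (π.prod volume) := by
    have : (Function.uncurry fun (xy : ℝ × ℝ) (s : ℝ) =>
        S.indicator (1 : (ℝ × ℝ) × ℝ → ℝ≥0∞) (xy, s))
        = S.indicator (1 : (ℝ × ℝ) × ℝ → ℝ≥0∞) := by
      funext q; rfl
    rw [this]
    exact ((measurable_indicator_const_iff 1).mpr (measurable_slab t)).aemeasurable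
  rw [lintegral_lintegral_swap hmeas]
  congr 1
  funext s
  have h2 : ∀ xy : ℝ × ℝ, S.indicator (1 : (ℝ × ℝ) × ℝ → ℝ≥0∞) (xy, s)
      = ({xy : ℝ × ℝ | xy.2 + t ≤ s ∧ s < xy.1}.indicator (1 : ℝ × ℝ → ℝ≥0∞) xy) := by
    intro xy; by_cases h : xy.2 + t ≤ s ∧ s < xy.1 <;> simp [Set.indicator, hS, h]
  simp_rw [h2]
  exact lintegral_indicator_one (measurable_slab2 t s)

/-! ### Comparison of slab measures -/

lemma ennreal_sub_ineq {α β : ℝ≥0∞} (hα : α ≤ 1) (hβ : β ≤ 1) :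
    ENNReal.ofReal (β.toReal - α.toReal) ≤ (1 - α) - (1 - β) := by
  rcases le_total β α with h | h
  · have : β.toReal - α.toReal ≤ 0 := by
      have := ENNReal.toReal_mono (by exact (lt_of_le_of_lt hα ENNReal.one_lt_top).ne) h
      linarith
    simp [ENNReal.ofReal_of_nonpos, this]
  · have hαt : α ≠ ∞ := (lt_of_le_of_lt hα ENNReal.one_lt_top).ne
    have hβt : β ≠ ∞ := (lt_of_le_of_lt hβ ENNReal.one_lt_top).ne
    have h1β : (1:ℝ≥0∞) - β ≤ 1 - α := tsub_le_tsub_left h 1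
    have h1αt : (1:ℝ≥0∞) - α ≠ ∞ := (lt_of_le_of_lt tsub_le_self ENNReal.one_lt_top).ne
    have hfin : (1:ℝ≥0∞) - α - (1 - β) ≠ ∞ := (lt_of_le_of_lt (tsub_le_self.trans tsub_le_self)
      ENNReal.one_lt_top).ne
    rw [ENNReal.ofReal_le_iff_le_toReal hfin]
    rw [ENNReal.toReal_sub_of_le h1β h1αt, ENNReal.toReal_sub_of_le hα ENNReal.one_ne_top,
      ENNReal.toReal_sub_of_le hβ ENNReal.one_ne_top, ENNReal.toReal_one]
    linarith

lemma coupling_set_lb (p₀ p₁ : Measure ℝ) [IsProbabilityMeasure p₀] [IsProbabilityMeasure p₁]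
    (π : Measure (ℝ × ℝ)) [IsProbabilityMeasure π]
    (hπ₀ : π.map Prod.fst = p₀) (hπ₁ : π.map Prod.snd = p₁) (s t : ℝ) :
    (1 - p₀ (Iic s)) - (1 - p₁ (Iic (s - t))) ≤ π {xy : ℝ × ℝ | xy.2 + t ≤ s ∧ s < xy.1} := by
  have hB : π {xy : ℝ × ℝ | s < xy.1} = 1 - p₀ (Iic s) := by
    rw [← hπ₀, Measure.map_apply measurable_fst measurableSet_Iic]
    have : {xy : ℝ × ℝ | s < xy.1} = (Prod.fst ⁻¹' Iic s)ᶜ := by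
      ext xy; simp [not_le]
    rw [this, measure_compl (measurable_fst measurableSet_Iic) (measure_ne_top π _),
      measure_univ]
  have hC : π {xy : ℝ × ℝ | s - t < xy.2} = 1 - p₁ (Iic (s - t)) := by
    rw [← hπ₁, Measure.map_apply measurable_snd measurableSet_Iic]
    have : {xy : ℝ × ℝ | s - t < xy.2} = (Prod.snd ⁻¹' Iic (s - t))ᶜ := by
      ext xy; simp [not_le]
    rw [this, measure_compl (measurable_snd measurableSet_Iic) (measure_ne_top π _),
      measure_univ]
  rw [← hB, ← hC]
  refine tsub_le_iff_right.mpr ?_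
  calc π {xy : ℝ × ℝ | s < xy.1}
      ≤ π ({xy : ℝ × ℝ | xy.2 + t ≤ s ∧ s < xy.1} ∪ {xy : ℝ × ℝ | s - t < xy.2}) := by
        apply measure_mono
        intro xy hxy
        rcases le_or_gt xy.2 (s - t) with h | h
        · exact Or.inl ⟨by linarith, hxy⟩
        · exact Or.inr h
    _ ≤ _ := measure_union_le _ _

/-! ### The comonotone (quantile) coupling -/

variable (p₀ p₁ : Measure ℝ) [IsProbabilityMeasure p₀] [IsProbabilityMeasure p₁]

/-- the comonotone (quantile) coupling -/
noncomputable def comon : Measure (ℝ × ℝ) :=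
  (volume.restrict (Ioo (0:ℝ) 1)).map (fun u => (quantile' p₀ u, quantile' p₁ u))

lemma aemeasurable_pair : AEMeasurable (fun u => (quantile' p₀ u, quantile' p₁ u))
    (volume.restrict (Ioo (0:ℝ) 1)) :=
  aemeasurable_quantile'.prodMk aemeasurable_quantile'

instance : IsProbabilityMeasure (comon p₀ p₁) :=
  Measure.isProbabilityMeasure_map (aemeasurable_pair p₀ p₁)

lemma comon_fst : (comon p₀ p₁).map Prod.fst = p₀ := by
  rw [comon, AEMeasurable.map_map_of_aemeasurable measurable_fst.aemeasurable
    (aemeasurable_pair p₀ p₁)]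
  exact map_quantile'

lemma comon_snd : (comon p₀ p₁).map Prod.snd = p₁ := by
  rw [comon, AEMeasurable.map_map_of_aemeasurable measurable_snd.aemeasurable
    (aemeasurable_pair p₀ p₁)]
  exact map_quantile'

lemma comon_swap : (comon p₀ p₁).map Prod.swap = comon p₁ p₀ := by
  rw [comon, AEMeasurable.map_map_of_aemeasurable measurable_swap.aemeasurable
    (aemeasurable_pair p₀ p₁)]
  rfl

lemma comon_slab_le (s t : ℝ) :
    comon p₀ p₁ {xy : ℝ × ℝ | xy.2 + t ≤ s ∧ s < xy.1}
      ≤ ENNReal.ofReal (cdf' p₁ (s - t) - cdf' p₀ s) := by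
  rw [comon, Measure.map_apply_of_aemeasurable (aemeasurable_pair p₀ p₁) (measurable_slab2 t s),
    Measure.restrict_apply' measurableSet_Ioo]
  have hset : (fun u => (quantile' p₀ u, quantile' p₁ u)) ⁻¹' {xy : ℝ × ℝ | xy.2 + t ≤ s ∧ s < xy.1}
      ∩ Ioo 0 1 ⊆ Ioc (cdf' p₀ s) (cdf' p₁ (s - t)) := by
    rintro u ⟨⟨h1, h2⟩, hu⟩
    constructor
    · by_contra h
      push_neg at h
      exact absurd ((quantile'_le_iff hu.1 hu.2).mpr h) (not_le.2 h2)
    · exact (quantile'_le_iff hu.1 hu.2).mp (by linarith)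
  calc _ ≤ volume (Ioc (cdf' p₀ s) (cdf' p₁ (s - t))) := measure_mono hset
    _ = _ := by rw [Real.volume_Ioc]

lemma key_ineq (π : Measure (ℝ × ℝ)) [IsProbabilityMeasure π]
    (hπ₀ : π.map Prod.fst = p₀) (hπ₁ : π.map Prod.snd = p₁) (t : ℝ) :
    ∫⁻ xy, ENNReal.ofReal (xy.1 - xy.2 - t) ∂(comon p₀ p₁)
      ≤ ∫⁻ xy, ENNReal.ofReal (xy.1 - xy.2 - t) ∂π := by
  rw [lintegral_posPart_eq, lintegral_posPart_eq]
  refine lintegral_mono fun s => ?_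
  calc comon p₀ p₁ {xy : ℝ × ℝ | xy.2 + t ≤ s ∧ s < xy.1}
      ≤ ENNReal.ofReal (cdf' p₁ (s - t) - cdf' p₀ s) := comon_slab_le p₀ p₁ s t
    _ ≤ (1 - p₀ (Iic s)) - (1 - p₁ (Iic (s - t))) :=
        ennreal_sub_ineq prob_le_one prob_le_one
    _ ≤ _ := coupling_set_lb p₀ p₁ π hπ₀ hπ₁ s t

lemma measurable_inner (t : ℝ) :
    Measurable (fun xy : ℝ × ℝ => ENNReal.ofReal (xy.1 - xy.2 - t)) := by fun_prop

lemma key_ineq' (π : Measure (ℝ × ℝ)) [IsProbabilityMeasure π]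
    (hπ₀ : π.map Prod.fst = p₀) (hπ₁ : π.map Prod.snd = p₁) (t : ℝ) :
    ∫⁻ xy, ENNReal.ofReal (xy.2 - xy.1 - t) ∂(comon p₀ p₁)
      ≤ ∫⁻ xy, ENNReal.ofReal (xy.2 - xy.1 - t) ∂π := by
  have hswap_fst : (π.map Prod.swap).map Prod.fst = p₁ := by
    rw [Measure.map_map measurable_fst measurable_swap]
    exact hπ₁
  have hswap_snd : (π.map Prod.swap).map Prod.snd = p₀ := by
    rw [Measure.map_map measurable_snd measurable_swap]
    exact hπ₀
  have : IsProbabilityMeasure (π.map Prod.swap) :=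
    Measure.isProbabilityMeasure_map measurable_swap.aemeasurable
  have h := key_ineq p₁ p₀ (π.map Prod.swap) hswap_fst hswap_snd t
  rw [← comon_swap p₀ p₁] at h
  rw [lintegral_map (measurable_inner t) measurable_swap,
    lintegral_map (measurable_inner t) measurable_swap] at h
  exact h

end Aux

section Main

open Filter intervalIntegral
open scoped ENNReal

/-! ### The kernel representation of `|u| ^ k` -/

lemma real_kernel_integral {k : ℝ} (hk : 1 < k) {a : ℝ} (ha : 0 < a) :
    ∫ t in (0:ℝ)..a, k * (k-1) * t ^ (k-2) * (a - t) = a ^ k := by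
  have hk0 : k ≠ 0 := by linarith
  have hk1 : k - 1 ≠ 0 := by linarith
  have h1 : ∫ t in (0:ℝ)..a, t ^ (k-2) = a ^ (k-1) / (k-1) := by
    rw [integral_rpow (Or.inl (by linarith))]
    rw [Real.zero_rpow (by linarith : k - 2 + 1 ≠ 0)]
    ring_nf
  have h2 : ∫ t in (0:ℝ)..a, t ^ (k-1) = a ^ k / k := by
    rw [integral_rpow (Or.inl (by linarith))]
    rw [Real.zero_rpow (by linarith : k - 1 + 1 ≠ 0)]
    ring_nf
  have hint1 : IntervalIntegrable (fun t : ℝ => t ^ (k-2)) volume 0 a :=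
    intervalIntegral.intervalIntegrable_rpow' (by linarith)
  have hint2 : IntervalIntegrable (fun t : ℝ => t ^ (k-1)) volume 0 a :=
    intervalIntegral.intervalIntegrable_rpow' (by linarith)
  have heq2 : ∀ t ∈ Set.uIcc (0:ℝ) a, k * (k-1) * t ^ (k-2) * (a - t)
      = (k * (k-1) * a) * t ^ (k-2) - (k * (k-1)) * t ^ (k-1) := by
    intro t ht
    rcases eq_or_ne t 0 with rfl | htne
    · rw [Real.zero_rpow (by linarith : k - 1 ≠ 0)]
      ring
    · rw [show k - 1 = (k-2) + 1 by ring, Real.rpow_add_one htne]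
      ring
  rw [integral_congr heq2, intervalIntegral.integral_sub (hint1.const_mul _) (hint2.const_mul _),
    intervalIntegral.integral_const_mul, intervalIntegral.integral_const_mul, h1, h2]
  have hak : a ^ (k-1) * a = a ^ k := by
    rw [← Real.rpow_add_one (ne_of_gt ha)]; ring_nf
  have e1 : (k * (k-1) * a) * (a ^ (k-1) / (k-1)) = k * (a ^ (k-1) * a) := by
    field_simp
  have e2 : (k * (k-1)) * (a ^ k / k) = (k-1) * a ^ k := by
    field_simp
  rw [e1, e2, hak]; ring

lemma kernel_integrable {k : ℝ} (hk : 1 < k) {a : ℝ} (ha : 0 < a) :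
    IntegrableOn (fun t : ℝ => k * (k-1) * t ^ (k-2) * (a - t)) (Ioc 0 a) volume := by
  have hint1 : IntervalIntegrable (fun t : ℝ => t ^ (k-2)) volume 0 a :=
    intervalIntegral.intervalIntegrable_rpow' (by linarith)
  have hint2 : IntervalIntegrable (fun t : ℝ => t ^ (k-1)) volume 0 a :=
    intervalIntegral.intervalIntegrable_rpow' (by linarith)
  have : IntervalIntegrable (fun t : ℝ => (k * (k-1) * a) * t ^ (k-2) - (k * (k-1)) * t ^ (k-1))
      volume 0 a := (hint1.const_mul _).sub (hint2.const_mul _)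
  have h := (intervalIntegrable_iff_integrableOn_Ioc_of_le ha.le).mp this
  apply h.congr_fun ?_ measurableSet_Ioc
  intro t ht
  simp only
  rw [show k - 1 = (k-2) + 1 by ring, Real.rpow_add_one ht.1.ne']
  ring

lemma kernel_nonneg {k : ℝ} (hk : 1 < k) {t : ℝ} (ht : 0 ≤ t) : 0 ≤ k * (k-1) * t ^ (k-2) := by
  have : (0:ℝ) ≤ k * (k-1) := by nlinarith
  exact mul_nonneg this (Real.rpow_nonneg ht _)

lemma lintegral_kernel {k : ℝ} (hk : 1 < k) {a : ℝ} (ha : 0 ≤ a) :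
    ∫⁻ t in Ioi (0:ℝ), ENNReal.ofReal (k * (k-1) * t ^ (k-2)) * ENNReal.ofReal (a - t) ∂volume
      = ENNReal.ofReal (a ^ k) := by
  rcases eq_or_lt_of_le ha with rfl | ha
  · have hz : ∀ t ∈ Ioi (0:ℝ), ENNReal.ofReal (k * (k-1) * t ^ (k-2)) * ENNReal.ofReal ((0:ℝ) - t)
        = (0 : ℝ≥0∞) := by
      intro t ht
      have h0 : ENNReal.ofReal ((0:ℝ) - t) = 0 :=
        ENNReal.ofReal_of_nonpos (by simp only [zero_sub]; linarith [mem_Ioi.mp ht])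
      rw [h0, mul_zero]
    rw [setLIntegral_congr_fun_ae measurableSet_Ioi (Filter.Eventually.of_forall hz)]
    simp [Real.zero_rpow (by linarith : k ≠ 0)]
  · have hsplit : Ioi (0:ℝ) = Ioc 0 a ∪ Ioi a := (Ioc_union_Ioi_eq_Ioi ha.le).symm
    rw [hsplit, lintegral_union measurableSet_Ioi Ioc_disjoint_Ioi_same]
    have hzero : ∫⁻ t in Ioi a,
        ENNReal.ofReal (k * (k-1) * t ^ (k-2)) * ENNReal.ofReal (a - t) ∂volume = 0 := by
      rw [setLIntegral_congr_fun_ae measurableSet_Ioi (Filter.Eventually.of_forall ?_)]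
      · exact lintegral_zero
      · intro t ht
        have h0 : ENNReal.ofReal (a - t) = 0 :=
          ENNReal.ofReal_of_nonpos (by linarith [mem_Ioi.mp ht])
        rw [h0, mul_zero]
    rw [hzero, add_zero]
    have hcong : ∀ t ∈ Ioc (0:ℝ) a, ENNReal.ofReal (k * (k-1) * t ^ (k-2)) * ENNReal.ofReal (a - t)
        = ENNReal.ofReal (k * (k-1) * t ^ (k-2) * (a - t)) := by
      intro t ht
      rw [← ENNReal.ofReal_mul (kernel_nonneg hk ht.1.le)]
    rw [setLIntegral_congr_fun_ae measurableSet_Ioc (Filter.Eventually.of_forall hcong)]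
    rw [← ofReal_integral_eq_lintegral_ofReal (kernel_integrable hk ha)
      ((ae_restrict_iff' measurableSet_Ioc).mpr (Filter.Eventually.of_forall ?_))]
    · rw [← intervalIntegral.integral_of_le ha.le, real_kernel_integral hk ha]
    · intro t ht
      exact mul_nonneg (kernel_nonneg hk ht.1.le) (by linarith [ht.2])

lemma posparts_add {u t : ℝ} (ht : 0 ≤ t) :
    ENNReal.ofReal (u - t) + ENNReal.ofReal (-u - t) = ENNReal.ofReal (|u| - t) := by
  rcases le_total 0 u with h | h
  · have h0 : ENNReal.ofReal (-u - t) = 0 := ENNReal.ofReal_of_nonpos (by linarith)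
    rw [abs_of_nonneg h, h0, add_zero]
  · have h0 : ENNReal.ofReal (u - t) = 0 := ENNReal.ofReal_of_nonpos (by linarith)
    rw [abs_of_nonpos h, h0, zero_add]

lemma abs_rpow_rep {k : ℝ} (hk : 1 < k) (u : ℝ) :
    ENNReal.ofReal (|u| ^ k) = ∫⁻ t in Ioi (0:ℝ),
      ENNReal.ofReal (k * (k-1) * t ^ (k-2)) *
        (ENNReal.ofReal (u - t) + ENNReal.ofReal (-u - t)) ∂volume := by
  rw [← lintegral_kernel hk (abs_nonneg u)]
  refine (setLIntegral_congr_fun_ae measurableSet_Ioi (Filter.Eventually.of_forall ?_)).symm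
  intro t ht
  rw [posparts_add (le_of_lt (mem_Ioi.mp ht))]

/-! ### Main comparison -/

variable (p₀ p₁ : Measure ℝ) [IsProbabilityMeasure p₀] [IsProbabilityMeasure p₁]

lemma main_comparison {k : ℝ} (hk : 1 ≤ k) (π : Measure (ℝ × ℝ)) [IsProbabilityMeasure π]
    (hπ₀ : π.map Prod.fst = p₀) (hπ₁ : π.map Prod.snd = p₁) :
    ∫⁻ xy, ENNReal.ofReal (|xy.1 - xy.2| ^ k) ∂(comon p₀ p₁)
      ≤ ∫⁻ xy, ENNReal.ofReal (|xy.1 - xy.2| ^ k) ∂π := by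
  rcases eq_or_lt_of_le hk with rfl | hk1
  · have h1 : ∀ xy : ℝ × ℝ, ENNReal.ofReal (|xy.1 - xy.2| ^ (1:ℝ))
        = ENNReal.ofReal (xy.1 - xy.2 - 0) + ENNReal.ofReal (xy.2 - xy.1 - 0) := by
      intro xy
      rw [Real.rpow_one, show xy.2 - xy.1 - 0 = -(xy.1 - xy.2) - 0 by ring,
        posparts_add le_rfl, sub_zero]
    simp_rw [h1]
    rw [lintegral_add_left (measurable_inner 0), lintegral_add_left (measurable_inner 0)]
    exact add_le_add (key_ineq p₀ p₁ π hπ₀ hπ₁ 0) (key_ineq' p₀ p₁ π hπ₀ hπ₁ 0)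
  · have hrep : ∀ μ : Measure (ℝ × ℝ), IsProbabilityMeasure μ →
        ∫⁻ xy, ENNReal.ofReal (|xy.1 - xy.2| ^ k) ∂μ
          = ∫⁻ t in Ioi (0:ℝ), ENNReal.ofReal (k * (k-1) * t ^ (k-2)) *
              ((∫⁻ xy, ENNReal.ofReal (xy.1 - xy.2 - t) ∂μ)
                + (∫⁻ xy, ENNReal.ofReal (xy.2 - xy.1 - t) ∂μ)) ∂volume := by
      intro μ hμ
      have step1 : ∫⁻ xy, ENNReal.ofReal (|xy.1 - xy.2| ^ k) ∂μ
          = ∫⁻ xy, ∫⁻ t in Ioi (0:ℝ), ENNReal.ofReal (k * (k-1) * t ^ (k-2)) *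
              (ENNReal.ofReal (xy.1 - xy.2 - t) + ENNReal.ofReal (xy.2 - xy.1 - t)) ∂volume ∂μ := by
        refine lintegral_congr fun xy => ?_
        have := abs_rpow_rep hk1 (xy.1 - xy.2)
        simp_rw [show ∀ t : ℝ, -(xy.1 - xy.2) - t = xy.2 - xy.1 - t from fun t => by ring] at this
        exact this
      rw [step1]
      have hmeas : AEMeasurable (Function.uncurry fun (xy : ℝ × ℝ) (t : ℝ) =>
          ENNReal.ofReal (k * (k-1) * t ^ (k-2)) *
            (ENNReal.ofReal (xy.1 - xy.2 - t) + ENNReal.ofReal (xy.2 - xy.1 - t)))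
          (μ.prod (volume.restrict (Ioi 0))) := by
        apply Measurable.aemeasurable
        apply Measurable.mul (f := fun q : (ℝ × ℝ) × ℝ => ENNReal.ofReal (k * (k-1) * q.2 ^ (k-2)))
          (g := fun q => ENNReal.ofReal (q.1.1 - q.1.2 - q.2) + ENNReal.ofReal (q.1.2 - q.1.1 - q.2))
        · fun_prop
        · fun_prop
      rw [lintegral_lintegral_swap hmeas]
      refine lintegral_congr fun t => ?_
      rw [lintegral_const_mul' _ _ ENNReal.ofReal_ne_top,
        lintegral_add_left (measurable_inner t)]
    rw [hrep (comon p₀ p₁) inferInstance, hrep π inferInstance]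
    refine lintegral_mono fun t => ?_
    exact mul_le_mul_right (add_le_add (key_ineq p₀ p₁ π hπ₀ hπ₁ t)
      (key_ineq' p₀ p₁ π hπ₀ hπ₁ t)) _

end Main

section Finito
open Filter
open scoped ENNReal

lemma bound_pt {k : ℝ} (hk : 1 ≤ k) (x y : ℝ) : |x - y| ^ k ≤ 2 ^ k * (|x| ^ k + |y| ^ k) := by
  have h0k : (0:ℝ) ≤ k := by linarith
  have habs : |x - y| ≤ |x| + |y| := by
    rw [sub_eq_add_neg]
    exact (abs_add_le x (-y)).trans_eq (by rw [abs_neg])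
  have h1 : |x - y| ≤ 2 * max |x| |y| := by
    rcases le_total |x| |y| with h | h
    · have := le_max_right |x| |y|; linarith
    · have := le_max_left |x| |y|; linarith
  calc |x - y| ^ k ≤ (2 * max |x| |y|) ^ k :=
        Real.rpow_le_rpow (abs_nonneg _) h1 h0k
    _ = 2 ^ k * (max |x| |y|) ^ k :=
        Real.mul_rpow (by norm_num) (le_max_of_le_left (abs_nonneg x))
    _ ≤ 2 ^ k * (|x| ^ k + |y| ^ k) := by
        apply mul_le_mul_of_nonneg_left ?_ (Real.rpow_nonneg (by norm_num) k)
        rcases max_cases |x| |y| with ⟨hm, _⟩ | ⟨hm, _⟩ <;> rw [hm]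
        · nlinarith [Real.rpow_nonneg (abs_nonneg y) k]
        · nlinarith [Real.rpow_nonneg (abs_nonneg x) k]

lemma lintegral_cost_ne_top {k : ℝ} (hk : 1 ≤ k)
    (p₀ p₁ : Measure ℝ) [IsProbabilityMeasure p₀] [IsProbabilityMeasure p₁]
    (h₀ : Integrable (fun x => |x| ^ k) p₀) (h₁ : Integrable (fun x => |x| ^ k) p₁)
    (π : Measure (ℝ × ℝ)) [IsProbabilityMeasure π]
    (hπ₀ : π.map Prod.fst = p₀) (hπ₁ : π.map Prod.snd = p₁) :
    ∫⁻ xy, ENNReal.ofReal (|xy.1 - xy.2| ^ k) ∂π ≠ ⊤ := by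
  have hb : ∀ xy : ℝ × ℝ, ENNReal.ofReal (|xy.1 - xy.2| ^ k)
      ≤ ENNReal.ofReal (2 ^ k) * (ENNReal.ofReal (|xy.1| ^ k) + ENNReal.ofReal (|xy.2| ^ k)) := by
    intro xy
    rw [← ENNReal.ofReal_add (by positivity) (by positivity),
      ← ENNReal.ofReal_mul (by positivity)]
    exact ENNReal.ofReal_le_ofReal (bound_pt hk _ _)
  have hfin0 : ∫⁻ x, ENNReal.ofReal (|x| ^ k) ∂p₀ < ⊤ :=
    lt_of_le_of_lt (lintegral_ofReal_le_lintegral_enorm _) h₀.hasFiniteIntegral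
  have hfin1 : ∫⁻ x, ENNReal.ofReal (|x| ^ k) ∂p₁ < ⊤ :=
    lt_of_le_of_lt (lintegral_ofReal_le_lintegral_enorm _) h₁.hasFiniteIntegral
  have m0 : ∫⁻ xy : ℝ × ℝ, ENNReal.ofReal (|xy.1| ^ k) ∂π = ∫⁻ x, ENNReal.ofReal (|x| ^ k) ∂p₀ := by
    rw [← hπ₀, lintegral_map (by fun_prop) measurable_fst]
  have m1 : ∫⁻ xy : ℝ × ℝ, ENNReal.ofReal (|xy.2| ^ k) ∂π = ∫⁻ x, ENNReal.ofReal (|x| ^ k) ∂p₁ := by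
    rw [← hπ₁, lintegral_map (by fun_prop) measurable_snd]
  have hle := lintegral_mono hb (μ := π)
  rw [lintegral_const_mul' _ _ ENNReal.ofReal_ne_top,
    lintegral_add_left (by fun_prop), m0, m1] at hle
  exact ne_top_of_le_ne_top
    (ENNReal.mul_ne_top ENNReal.ofReal_ne_top
      (ENNReal.add_ne_top.mpr ⟨hfin0.ne, hfin1.ne⟩)) hle

end Finito

open Filter
open scoped ENNReal

/-- The `k`-Wasserstein distance on `ℝ` (to the power `k`) is the `L^k` distance
between quantile functions. -/
theorem wasserstein_eq_integral_quantile
    (p₀ p₁ : Measure ℝ) [IsProbabilityMeasure p₀] [IsProbabilityMeasure p₁]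
    (k : ℝ) (hk : 1 ≤ k)
    (h₀ : Integrable (fun x => |x| ^ k) p₀) (h₁ : Integrable (fun x => |x| ^ k) p₁) :
    sInf {c : ℝ | ∃ π : Measure (ℝ × ℝ), IsProbabilityMeasure π ∧
        π.map Prod.fst = p₀ ∧ π.map Prod.snd = p₁ ∧
        c = ∫ xy, |xy.1 - xy.2| ^ k ∂π} =
      ∫ u in Ioo (0:ℝ) 1, |quantile' p₀ u - quantile' p₁ u| ^ k := by
  have hcostmeas : Measurable (fun xy : ℝ × ℝ => |xy.1 - xy.2| ^ k) := by fun_prop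
  have hQmeas : AEMeasurable (fun u => |quantile' p₀ u - quantile' p₁ u| ^ k)
      (volume.restrict (Ioo (0:ℝ) 1)) := by
    have h1 : Measurable (fun x : ℝ => |x| ^ k) := by fun_prop
    exact h1.comp_aemeasurable (aemeasurable_quantile'.sub aemeasurable_quantile')
  set L := ∫⁻ xy, ENNReal.ofReal (|xy.1 - xy.2| ^ k) ∂(comon p₀ p₁) with hLdef
  have hconv : ∀ μ : Measure (ℝ × ℝ), ∫ xy, |xy.1 - xy.2| ^ k ∂μ
      = (∫⁻ xy, ENNReal.ofReal (|xy.1 - xy.2| ^ k) ∂μ).toReal := fun μ =>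
    integral_eq_lintegral_of_nonneg_ae (Eventually.of_forall fun xy => by positivity)
      hcostmeas.aestronglyMeasurable
  have hRHS : ∫ u in Ioo (0:ℝ) 1, |quantile' p₀ u - quantile' p₁ u| ^ k = L.toReal := by
    rw [integral_eq_lintegral_of_nonneg_ae (Eventually.of_forall fun u => by positivity)
      hQmeas.aestronglyMeasurable]
    congr 1
    rw [hLdef, comon, lintegral_map' (by fun_prop : Measurable fun xy : ℝ × ℝ =>
      ENNReal.ofReal (|xy.1 - xy.2| ^ k)).aemeasurable (aemeasurable_pair p₀ p₁)]
  have hlb : ∀ c ∈ {c : ℝ | ∃ π : Measure (ℝ × ℝ), IsProbabilityMeasure π ∧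
      π.map Prod.fst = p₀ ∧ π.map Prod.snd = p₁ ∧
      c = ∫ xy, |xy.1 - xy.2| ^ k ∂π}, L.toReal ≤ c := by
    rintro c ⟨π, hπ, hπ₀, hπ₁, rfl⟩
    rw [hconv π]
    have hle : L ≤ ∫⁻ xy, ENNReal.ofReal (|xy.1 - xy.2| ^ k) ∂π :=
      main_comparison p₀ p₁ hk π hπ₀ hπ₁
    have hfinπ : ∫⁻ xy, ENNReal.ofReal (|xy.1 - xy.2| ^ k) ∂π ≠ ⊤ :=
      lintegral_cost_ne_top hk p₀ p₁ h₀ h₁ π hπ₀ hπ₁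
    exact (ENNReal.toReal_le_toReal (ne_top_of_le_ne_top hfinπ hle) hfinπ).mpr hle
  have hmem : L.toReal ∈ {c : ℝ | ∃ π : Measure (ℝ × ℝ), IsProbabilityMeasure π ∧
      π.map Prod.fst = p₀ ∧ π.map Prod.snd = p₁ ∧
      c = ∫ xy, |xy.1 - xy.2| ^ k ∂π} :=
    ⟨comon p₀ p₁, inferInstance, comon_fst p₀ p₁, comon_snd p₀ p₁, (hconv _).symm⟩
  rw [hRHS]
  exact le_antisymm (csInf_le ⟨L.toReal, fun c hc => hlb c hc⟩ hmem)
    (le_csInf ⟨_, hmem⟩ hlb)
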